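/- arXiv:1511.06999 — 5 statements merged into one kernel-verified Lean document; each statement's English description precedes it below -/
import Mathlib

section
/- Suppose V = 0. Then there exists ε₀ > 0 such that for every 0 < ε < ε₀ there exist a real constant u₀ and a real constant m₀ > 0 satisfying u₀ + H(0) = m₀^α + ε·m₀ and m₀ = 1 − ε·u₀; in particular the constant pair (u, m) = (u₀, m₀) solves Problem 1 with V = 0. -/
open Set intervalIntegral

noncomputable section

/-- `f : ℝ → ℝ` is ½-Hölder continuous: there is `K ≥ 0` with
`|f x - f y| ≤ K * |x - y| ^ (1/2)` for all `x y`. -/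
def IsHolderHalf (f : ℝ → ℝ) : Prop :=
  ∃ K : ℝ, 0 ≤ K ∧ ∀ x y : ℝ, |f x - f y| ≤ K * |x - y| ^ ((1 : ℝ) / 2)

/-- `f` is a 1-periodic function of class `C²` (a `C²` function on the torus `𝕋`). -/
def MemC2T (f : ℝ → ℝ) : Prop :=
  Function.Periodic f 1 ∧ ContDiff ℝ 2 f

/-- `f ∈ C^{2,1/2}(𝕋)`: 1-periodic, of class `C²`, with ½-Hölder continuous
second derivative. -/
def MemC2HalfT (f : ℝ → ℝ) : Prop :=
  MemC2T f ∧ IsHolderHalf (deriv (deriv f))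

/-- `(u, m)` is a solution of Problem 1 with Hamiltonian `H`, potential `V`,
exponent `α` and parameter `ε`: `u, m` are 1-periodic `C²` functions, `m > 0`
everywhere, and the system
`u - u'' + H(u') + V = m^α + ε (m - m'')`,
`m - m'' - (H'(u') m)' = 1 - ε (u - u'')`
holds pointwise. -/
def SolvesMFG (H V : ℝ → ℝ) (α ε : ℝ) (u m : ℝ → ℝ) : Prop :=
  MemC2T u ∧ MemC2T m ∧ (∀ x, 0 < m x) ∧
  (∀ x : ℝ, u x - deriv (deriv u) x + H (deriv u x) + V x
      = m x ^ α + ε * (m x - deriv (deriv m) x)) ∧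
  (∀ x : ℝ, m x - deriv (deriv m) x
      - deriv (fun y => deriv H (deriv u y) * m y) x
      = 1 - ε * (u x - deriv (deriv u) x))

/-- For `V = 0` there exists `ε₀ > 0` such that for every
`0 < ε < ε₀` there are constants `u₀` and `m₀ > 0` with
`u₀ + H(0) = m₀^α + ε m₀` and `m₀ = 1 - ε u₀`; in particular the constant pair
`(u₀, m₀)` solves Problem 1 with `V = 0`. -/
theorem existence_V_zero (α : ℝ) (hα : 0 < α) (H : ℝ → ℝ) (hH : ContDiff ℝ 2 H) :
    ∃ ε₀ > 0, ∀ ε : ℝ, 0 < ε → ε < ε₀ →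
      ∃ u₀ m₀ : ℝ, 0 < m₀ ∧ u₀ + H 0 = m₀ ^ α + ε * m₀ ∧ m₀ = 1 - ε * u₀ ∧
        SolvesMFG H (fun _ => 0) α ε (fun _ => u₀) (fun _ => m₀) := by
  refine ⟨min 1 (1 / (1 + |H 0|)), lt_min one_pos (by positivity), fun ε hε hε' => ?_⟩
  have hε1 : ε ≤ 1 := le_of_lt (lt_of_lt_of_le hε' (min_le_left _ _))
  have hεH : ε * |H 0| < 1 := by
    have h2 : ε < 1 / (1 + |H 0|) := lt_of_lt_of_le hε' (min_le_right _ _)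
    have hpos : (0:ℝ) < 1 + |H 0| := by positivity
    nlinarith [abs_nonneg (H 0), (lt_div_iff₀ hpos).mp h2]
  -- define f and find a root m₀ ∈ (0, M]
  set f : ℝ → ℝ := fun m => ε * m ^ α + ε ^ 2 * m + m - 1 - ε * H 0 with hf
  have hfc : Continuous f := by
    have h1 : Continuous fun m : ℝ => m ^ α := by
      apply continuous_iff_continuousAt.mpr
      intro x
      exact Real.continuousAt_rpow_const x α (Or.inr hα.le)
    fun_prop
  set M : ℝ := 2 + |H 0| with hM
  have hf0 : f 0 < 0 := by
    have : (0:ℝ) ^ α = 0 := Real.zero_rpow (ne_of_gt hα)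
    simp only [hf, this]
    have := neg_abs_le (H 0)
    nlinarith [abs_nonneg (H 0)]
  have hfM : 0 ≤ f M := by
    have hMpos : (0:ℝ) ≤ M := by positivity
    have h1 : (0:ℝ) ≤ M ^ α := Real.rpow_nonneg hMpos α
    have := le_abs_self (H 0)
    simp only [hf, hM]
    nlinarith [abs_nonneg (H 0), sq_nonneg ε]
  have hroot : (0:ℝ) ∈ f '' Icc 0 M := by
    apply intermediate_value_Icc (by positivity : (0:ℝ) ≤ M) hfc.continuousOn
    exact ⟨le_of_lt hf0, hfM⟩
  obtain ⟨m₀, hm₀mem, hm₀⟩ := hroot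
  have hm₀pos : 0 < m₀ := by
    rcases lt_or_eq_of_le hm₀mem.1 with h | h
    · exact h
    · exfalso; rw [← h] at hm₀; exact absurd hm₀ (ne_of_lt hf0)
  set u₀ : ℝ := (1 - m₀) / ε with hu₀
  have hεne : ε ≠ 0 := ne_of_gt hε
  have key : ε * m₀ ^ α + ε ^ 2 * m₀ + m₀ - 1 - ε * H 0 = 0 := hm₀
  have heq1 : u₀ + H 0 = m₀ ^ α + ε * m₀ := by
    rw [hu₀]
    field_simp [hu₀]
    nlinarith [key]
  have heq2 : m₀ = 1 - ε * u₀ := by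
    rw [hu₀]
    field_simp [hu₀]
    ring
  refine ⟨u₀, m₀, hm₀pos, heq1, heq2, ?_⟩
  have hdu : deriv (fun _ : ℝ => u₀) = fun _ => 0 := by
    funext x; exact deriv_const x u₀
  have hdm : deriv (fun _ : ℝ => m₀) = fun _ => 0 := by
    funext x; exact deriv_const x m₀
  refine ⟨⟨fun x => rfl, contDiff_const⟩, ⟨fun x => rfl, contDiff_const⟩,
    fun _ => hm₀pos, ?_, ?_⟩
  · intro x
    simp only [hdu, hdm, deriv_const']
    linarith [heq1]
  · intro x
    simp only [hdu, hdm, deriv_const']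
    linarith [heq2]
end
end

section
/- Suppose V = 0 and H(0) > 0. Then for every ε > 0 there exist a real constant u₀ and a real constant m₀ with 0 < m₀ < 1 + εC for any fixed C > |H(0)|, satisfying u₀ + H(0) = m₀^α + ε·m₀ and m₀ = 1 − ε·u₀; hence the constant pair (u₀, m₀) solves Problem 1 with V = 0 for every ε > 0. -/
open Set intervalIntegral

noncomputable section

/-- For `V = 0` and `H(0) > 0`, for every `ε > 0` and every
`C > |H(0)|` there are constants `u₀` and `m₀` with `0 < m₀ < 1 + ε C`,
`u₀ + H(0) = m₀^α + ε m₀` and `m₀ = 1 - ε u₀`; hence the constant pair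
`(u₀, m₀)` solves Problem 1 with `V = 0` for every `ε > 0`. -/
theorem existence_V_zero_H0_pos (α : ℝ) (hα : 0 < α)
    (H : ℝ → ℝ) (hH : ContDiff ℝ 2 H) (hH0 : 0 < H 0) :
    ∀ ε : ℝ, 0 < ε → ∀ C : ℝ, |H 0| < C →
      ∃ u₀ m₀ : ℝ, 0 < m₀ ∧ m₀ < 1 + ε * C ∧
        u₀ + H 0 = m₀ ^ α + ε * m₀ ∧ m₀ = 1 - ε * u₀ ∧
        SolvesMFG H (fun _ => 0) α ε (fun _ => u₀) (fun _ => m₀) := by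
  intro ε hε C hC
  set f : ℝ → ℝ := fun m => m ^ α + ε * m + (m - 1) / ε - H 0 with hf
  have hcont : Continuous f := by
    apply Continuous.sub
    · apply Continuous.add
      · exact (Real.continuous_rpow_const hα.le).add (continuous_const.mul continuous_id)
      · exact (continuous_id.sub continuous_const).div_const ε
    · exact continuous_const
  have hb : (0 : ℝ) < 1 + ε * C := by
    have : (0:ℝ) ≤ |H 0| := abs_nonneg _
    nlinarith
  have hf0 : f 0 < 0 := by
    have h0 : (0:ℝ) ^ α = 0 := Real.zero_rpow hα.ne'
    simp only [hf, h0]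
    have : (0 - 1) / ε < 0 := by
      apply div_neg_of_neg_of_pos <;> linarith
    nlinarith
  have hfb : 0 < f (1 + ε * C) := by
    have h1 : 0 < (1 + ε * C) ^ α := Real.rpow_pos_of_pos hb α
    have h2 : (1 + ε * C - 1) / ε = C := by field_simp; ring
    have h3 : H 0 ≤ |H 0| := le_abs_self _
    simp only [hf, h2]
    nlinarith
  obtain ⟨m₀, hm₀mem, hm₀⟩ := intermediate_value_Ioo (le_of_lt hb)
    hcont.continuousOn (show f 0 < 0 ∧ 0 < f (1 + ε * C) from ⟨hf0, hfb⟩)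
  obtain ⟨hm₀pos, hm₀lt⟩ := hm₀mem
  refine ⟨(1 - m₀) / ε, m₀, hm₀pos, hm₀lt, ?_, ?_, ?_⟩
  · have := hm₀
    simp only [hf] at this
    have hεne : ε ≠ 0 := hε.ne'
    field_simp at this ⊢
    nlinarith [this]
  · field_simp; ring
  · have heq1 : (1 - m₀) / ε + H 0 = m₀ ^ α + ε * m₀ := by
      simp only [hf] at hm₀
      have hεne : ε ≠ 0 := hε.ne'
      field_simp at hm₀ ⊢
      nlinarith [hm₀]
    have heq2 : m₀ = 1 - ε * ((1 - m₀) / ε) := by field_simp; ring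
    refine ⟨⟨fun x => rfl, contDiff_const⟩, ⟨fun x => rfl, contDiff_const⟩,
      fun x => hm₀pos, ?_, ?_⟩
    · intro x
      simp [deriv_const, heq1]
    · intro x
      simp only [deriv_const', deriv_const]
      linarith [heq2]
end
end

section
/- Suppose assumptions (A1) and (A2) hold. Then there exists a constant C > 0, depending only on γ, α, the constants C1, C2, C3, C̃1, C̃2, C̃3 of (A1)–(A2), and on sup|V|, such that for every 0 < ε ≤ 1 and every solution (u, m) of Problem 1, the following energy estimate holds: ∫₀¹ m^{α+1} dx + ∫₀¹ |u'|^γ (1 + m) dx + ε ∫₀¹ (u² + m² + (u')² + (m')²) dx ≤ C. -/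
open Set intervalIntegral

noncomputable section

lemma periodic_deriv' (f : ℝ → ℝ) (hf : Function.Periodic f 1) :
    Function.Periodic (deriv f) 1 := by
  intro x
  have h : (fun y : ℝ => f (y + 1)) = f := funext hf
  calc deriv f (x + 1) = deriv (fun y : ℝ => f (y + 1)) x := (deriv_comp_add_const f 1 x).symm
    _ = deriv f x := by rw [h]

lemma young_aux (a b β : ℝ) (hb : 0 < b) (hβ : 0 ≤ β) (hlt : β < a)
    (t : ℝ) (ht : 0 ≤ t) :
    b * t ^ β ≤ (1/4) * t ^ a + b * ((4*b) ^ (a - β)⁻¹) ^ β := by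
  set T : ℝ := (4*b) ^ (a-β)⁻¹ with hTdef
  have h4b : (0:ℝ) < 4*b := by linarith
  have hT0 : 0 < T := Real.rpow_pos_of_pos h4b _
  rcases le_or_gt t T with h | h
  · have h1 : t ^ β ≤ T ^ β := Real.rpow_le_rpow ht h hβ
    have h2 : 0 ≤ (1/4:ℝ) * t ^ a := by positivity
    nlinarith
  · have ht0 : 0 < t := lt_trans hT0 h
    have hTe : T ^ (a - β) = 4*b := by
      rw [hTdef, ← Real.rpow_mul h4b.le, inv_mul_cancel₀ (by linarith : a - β ≠ 0),
        Real.rpow_one]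
    have hTt : (4*b) ≤ t ^ (a-β) := by
      rw [← hTe]; exact Real.rpow_le_rpow hT0.le h.le (by linarith)
    have hsplit : t ^ a = t ^ β * t ^ (a - β) := by
      rw [← Real.rpow_add ht0]; ring_nf
    have htβ : 0 < t ^ β := Real.rpow_pos_of_pos ht0 _
    have hTβ : 0 ≤ b * T ^ β := by positivity
    nlinarith [mul_le_mul_of_nonneg_left hTt htβ.le]


set_option maxHeartbeats 2000000 in
/-- Under assumptions (A1)–(A2), there is a constant `C > 0`,
depending only on `γ, α`, the constants of (A1)–(A2) and on `sup |V|`, such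
that for every `0 < ε ≤ 1` and every solution `(u, m)` of Problem 1, the
energy estimate
`∫₀¹ m^{α+1} + ∫₀¹ |u'|^γ (1 + m) + ε ∫₀¹ (u² + m² + u'² + m'²) ≤ C` holds. -/
theorem energy_estimate
    (α γ C1 C2 C3 tC1 tC2 tC3 KV : ℝ)
    (hα : 0 < α) (hγ : 1 < γ)
    (hC1 : 0 < C1) (hC2 : 0 < C2) (hC3 : 0 < C3)
    (htC1 : 0 < tC1) (htC2 : 0 < tC2) (htC3 : 0 < tC3) :
    ∃ C > 0, ∀ H V : ℝ → ℝ, ContDiff ℝ 2 H → Continuous V →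
      Function.Periodic V 1 → (∀ x, |V x| ≤ KV) →
      (∀ p : ℝ, -C1 + C2 * |p| ^ γ ≤ H p ∧ H p ≤ C1 + C3 * |p| ^ γ) →
      (∀ p : ℝ, -tC1 + tC2 * |p| ^ γ ≤ p * deriv H p - H p ∧
          p * deriv H p - H p ≤ tC1 + tC3 * |p| ^ γ) →
      ∀ ε : ℝ, 0 < ε → ε ≤ 1 → ∀ u m : ℝ → ℝ, SolvesMFG H V α ε u m →
        (∫ x in (0:ℝ)..1, m x ^ (α + 1))
          + (∫ x in (0:ℝ)..1, |deriv u x| ^ γ * (1 + m x))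
          + ε * (∫ x in (0:ℝ)..1,
              ((u x) ^ 2 + (m x) ^ 2 + (deriv u x) ^ 2 + (deriv m x) ^ 2)) ≤ C := by
  set KV' : ℝ := max KV 0 with hKV'def
  have hKV'0 : 0 ≤ KV' := le_max_right _ _
  set b₂ : ℝ := tC1 + 1 + KV' with hb₂def
  have hb₂ : 0 < b₂ := by simp only [hb₂def]; linarith
  set c₁ : ℝ := 1 * ((4*1) ^ (α + 1 - α)⁻¹) ^ α with hc₁def
  set c₂ : ℝ := b₂ * ((4*b₂) ^ (α + 1 - 1)⁻¹) ^ (1:ℝ) with hc₂def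
  have hc₁0 : 0 < c₁ := by
    have : (0:ℝ) < ((4*1) ^ (α + 1 - α)⁻¹ : ℝ) := Real.rpow_pos_of_pos (by norm_num) _
    simp only [hc₁def]
    have := Real.rpow_pos_of_pos this α
    linarith
  have hc₂0 : 0 < c₂ := by
    have h1 : (0:ℝ) < ((4*b₂) ^ (α + 1 - 1)⁻¹ : ℝ) := Real.rpow_pos_of_pos (by linarith) _
    have := Real.rpow_pos_of_pos h1 (1:ℝ)
    simp only [hc₂def]; positivity
  set M₀ : ℝ := c₁ + c₂ + C1 + KV' with hM₀def
  have hM₀ : 0 < M₀ := by simp only [hM₀def]; linarith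
  refine ⟨(3 + 1/C2 + 1/tC2) * M₀, by positivity, ?_⟩
  intro H V hH hV hVper hVK hA1 hA2 ε hε hε1 u m hsol
  obtain ⟨⟨huper, hu2⟩, ⟨hmper, hm2⟩, hmpos, heq1, heq2⟩ := hsol
  -- regularity facts
  have hu2' : ContDiff ℝ 1 (deriv u) := by
    have h : ContDiff ℝ ((1:ℕ∞) + 1) u := by exact_mod_cast hu2
    exact (contDiff_succ_iff_deriv.mp h).2.2
  have hm2' : ContDiff ℝ 1 (deriv m) := by
    have h : ContDiff ℝ ((1:ℕ∞) + 1) m := by exact_mod_cast hm2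
    exact (contDiff_succ_iff_deriv.mp h).2.2
  have hH' : ContDiff ℝ 1 (deriv H) := by
    have h : ContDiff ℝ ((1:ℕ∞) + 1) H := by exact_mod_cast hH
    exact (contDiff_succ_iff_deriv.mp h).2.2
  have cu : Continuous u := hu2.continuous
  have cm : Continuous m := hm2.continuous
  have cu' : Continuous (deriv u) := hu2.continuous_deriv (by norm_num)
  have cm' : Continuous (deriv m) := hm2.continuous_deriv (by norm_num)
  have cu'' : Continuous (deriv (deriv u)) := hu2'.continuous_deriv le_rfl
  have cm'' : Continuous (deriv (deriv m)) := hm2'.continuous_deriv le_rfl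
  have cH : Continuous H := hH.continuous
  have cH' : Continuous (deriv H) := hH.continuous_deriv (by norm_num)
  set g : ℝ → ℝ := fun y => deriv H (deriv u y) * m y with hgdef
  have hg1 : ContDiff ℝ 1 g := (hH'.comp hu2').mul (hm2.of_le (by norm_num))
  have cg : Continuous g := hg1.continuous
  have cg' : Continuous (deriv g) := hg1.continuous_deriv le_rfl
  -- HasDerivAt facts
  have hud : ∀ x : ℝ, HasDerivAt u (deriv u x) x :=
    fun x => ((hu2.differentiable (by norm_num)) x).hasDerivAt
  have hmd : ∀ x : ℝ, HasDerivAt m (deriv m x) x :=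
    fun x => ((hm2.differentiable (by norm_num)) x).hasDerivAt
  have hu'd : ∀ x : ℝ, HasDerivAt (deriv u) (deriv (deriv u) x) x :=
    fun x => ((hu2'.differentiable (by norm_num)) x).hasDerivAt
  have hm'd : ∀ x : ℝ, HasDerivAt (deriv m) (deriv (deriv m) x) x :=
    fun x => ((hm2'.differentiable (by norm_num)) x).hasDerivAt
  have hgd : ∀ x : ℝ, HasDerivAt g (deriv g x) x :=
    fun x => ((hg1.differentiable (by norm_num)) x).hasDerivAt
  -- periodicity of derivatives
  have hu'per : Function.Periodic (deriv u) 1 := periodic_deriv' u huper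
  have hm'per : Function.Periodic (deriv m) 1 := periodic_deriv' m hmper
  -- the test function F and its derivative F'
  set F : ℝ → ℝ := fun x =>
    (((-(deriv u x * (m x - 1)) + u x * deriv m x) + u x * g x)
      + ε * (deriv m x * (m x - 1))) + ε * (u x * deriv u x) with hFdef
  set F' : ℝ → ℝ := fun x =>
    (((-(deriv (deriv u) x * (m x - 1) + deriv u x * deriv m x)
        + (deriv u x * deriv m x + u x * deriv (deriv m) x))
      + (deriv u x * g x + u x * deriv g x))
      + ε * (deriv (deriv m) x * (m x - 1) + deriv m x * deriv m x))
      + ε * (deriv u x * deriv u x + u x * deriv (deriv u) x) with hF'def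
  have hFd : ∀ x ∈ Set.uIcc (0:ℝ) 1, HasDerivAt F (F' x) x := by
    intro x _
    exact (((((hu'd x).mul ((hmd x).sub_const 1)).neg.add ((hud x).mul (hm'd x))).add
      ((hud x).mul (hgd x))).add
      (((hm'd x).mul ((hmd x).sub_const 1)).const_mul ε)).add
      (((hud x).mul (hu'd x)).const_mul ε)
  have cF' : Continuous F' := by
    simp only [hF'def]
    fun_prop
  have hFint : ∫ x in (0:ℝ)..1, F' x = F 1 - F 0 :=
    intervalIntegral.integral_eq_sub_of_hasDerivAt hFd (cF'.intervalIntegrable 0 1)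
  have hF10 : F 1 = F 0 := by
    have e1 : u 1 = u 0 := by simpa using huper 0
    have e2 : m 1 = m 0 := by simpa using hmper 0
    have e3 : deriv u 1 = deriv u 0 := by simpa using hu'per 0
    have e4 : deriv m 1 = deriv m 0 := by simpa using hm'per 0
    have e5 : g 1 = g 0 := by simp only [hgdef]; rw [e2, e3]
    simp only [hFdef]
    rw [e1, e2, e3, e4, e5]
  -- the pointwise identity F' = NegS
  set Q : ℝ → ℝ := fun x =>
    (u x) ^ 2 + (m x) ^ 2 + (deriv u x) ^ 2 + (deriv m x) ^ 2 with hQdef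
  set NegS : ℝ → ℝ := fun x =>
    m x ^ (α+1) - m x ^ α - (m x - 1) * V x - ε * m x + ε * Q x
      + m x * (deriv u x * deriv H (deriv u x) - H (deriv u x)) + H (deriv u x) with hNegSdef
  have hptid : ∀ x : ℝ, F' x = NegS x := by
    intro x
    have h1 := heq1 x
    have h2 := heq2 x
    have hgx : g x = deriv H (deriv u x) * m x := rfl
    have hg'x : deriv (fun y => deriv H (deriv u y) * m y) x = deriv g x := rfl
    rw [hg'x] at h2
    have hpow : m x ^ (α+1) = m x ^ α * m x := Real.rpow_add_one (hmpos x).ne' α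
    simp only [hF'def, hNegSdef, hQdef]
    linear_combination (m x - 1) * h1 - u x * h2 - hpow + deriv u x * hgx
  -- ∫ NegS = 0
  have cmpow1 : Continuous (fun x => m x ^ (α+1)) := by
    rw [continuous_iff_continuousAt]; intro x
    exact (Real.continuousAt_rpow_const (m x) (α+1) (Or.inr (by linarith))).comp cm.continuousAt
  have cmpow0 : Continuous (fun x => m x ^ α) := by
    rw [continuous_iff_continuousAt]; intro x
    exact (Real.continuousAt_rpow_const (m x) α (Or.inr (by linarith))).comp cm.continuousAt
  have cabs : Continuous (fun x => |deriv u x| ^ γ) := by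
    rw [continuous_iff_continuousAt]; intro x
    exact (Real.continuousAt_rpow_const _ γ (Or.inr (by linarith))).comp cu'.abs.continuousAt
  have cQ : Continuous Q := by simp only [hQdef]; fun_prop
  have cNegS : Continuous NegS := by
    simp only [hNegSdef]
    fun_prop
  have hNegSint : ∫ x in (0:ℝ)..1, NegS x = 0 := by
    have : ∫ x in (0:ℝ)..1, NegS x = ∫ x in (0:ℝ)..1, F' x := by
      apply intervalIntegral.integral_congr
      intro x _
      exact (hptid x).symm
    rw [this, hFint, hF10, sub_self]
  -- pointwise lower bound: G ≤ NegS + M₀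
  set G : ℝ → ℝ := fun x =>
    (1/2) * m x ^ (α+1) + tC2 * (m x * |deriv u x| ^ γ)
      + C2 * |deriv u x| ^ γ + ε * Q x with hGdef
  have hpt : ∀ x : ℝ, G x ≤ NegS x + M₀ := by
    intro x
    have hm0 := hmpos x
    have hA1x := (hA1 (deriv u x)).1
    have hA2x := (hA2 (deriv u x)).1
    have hA2m : tC2 * (m x * |deriv u x| ^ γ) - tC1 * m x
        ≤ m x * (deriv u x * deriv H (deriv u x) - H (deriv u x)) := by
      nlinarith [mul_le_mul_of_nonneg_left hA2x hm0.le]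
    have hVx : |V x| ≤ KV' := le_trans (hVK x) (le_max_left _ _)
    have hVb : (m x - 1) * V x ≤ (m x + 1) * KV' := by
      calc (m x - 1) * V x ≤ |(m x - 1) * V x| := le_abs_self _
        _ = |m x - 1| * |V x| := abs_mul _ _
        _ ≤ (m x + 1) * KV' := by
            apply mul_le_mul _ hVx (abs_nonneg _) (by linarith)
            exact abs_le.mpr ⟨by linarith, by linarith⟩
    have hy1 : 1 * m x ^ α ≤ (1/4) * m x ^ (α+1) + c₁ := by
      have := young_aux (α+1) 1 α one_pos hα.le (by linarith) (m x) hm0.le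
      simpa [hc₁def] using this
    have hy2 : b₂ * m x ≤ (1/4) * m x ^ (α+1) + c₂ := by
      have := young_aux (α+1) b₂ 1 hb₂ zero_le_one (by linarith) (m x) hm0.le
      rw [Real.rpow_one] at this
      simpa [hc₂def] using this
    have hεm : ε * m x ≤ m x := by nlinarith
    have hεQ : 0 ≤ Q x := by simp only [hQdef]; positivity
    have habs : 0 ≤ |deriv u x| ^ γ := Real.rpow_nonneg (abs_nonneg _) _
    simp only [hGdef, hNegSdef, hM₀def, hb₂def] at *
    linarith [hA2m, hA1x, hVb, hy1, hy2, hεm]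
  -- integrate
  have cG : Continuous G := by
    simp only [hGdef]
    fun_prop
  have hGle : ∫ x in (0:ℝ)..1, G x ≤ M₀ := by
    have h1 : ∫ x in (0:ℝ)..1, G x ≤ ∫ x in (0:ℝ)..1, (NegS x + M₀) := by
      apply intervalIntegral.integral_mono_on zero_le_one
        (cG.intervalIntegrable 0 1) ((cNegS.add continuous_const).intervalIntegrable 0 1)
      intro x _
      exact hpt x
    have h2 : ∫ x in (0:ℝ)..1, (NegS x + M₀) = M₀ := by
      rw [intervalIntegral.integral_add (cNegS.intervalIntegrable 0 1)
        (intervalIntegrable_const), hNegSint, intervalIntegral.integral_const]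
      simp
    linarith
  -- split ∫ G
  set I1 : ℝ := ∫ x in (0:ℝ)..1, m x ^ (α+1) with hI1
  set I2 : ℝ := ∫ x in (0:ℝ)..1, m x * |deriv u x| ^ γ with hI2
  set I3 : ℝ := ∫ x in (0:ℝ)..1, |deriv u x| ^ γ with hI3
  set I4 : ℝ := ∫ x in (0:ℝ)..1, Q x with hI4
  have c5 : Continuous (fun x => (1/2) * m x ^ (α+1)) := continuous_const.mul cmpow1
  have c6 : Continuous (fun x => tC2 * (m x * |deriv u x| ^ γ)) :=
    continuous_const.mul (cm.mul cabs)
  have c7 : Continuous (fun x => C2 * |deriv u x| ^ γ) := continuous_const.mul cabs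
  have c8 : Continuous (fun x => ε * Q x) := continuous_const.mul cQ
  have hGsplit : ∫ x in (0:ℝ)..1, G x = (1/2) * I1 + tC2 * I2 + C2 * I3 + ε * I4 := by
    simp only [hGdef]
    rw [intervalIntegral.integral_add (((c5.fun_add c6).fun_add c7).intervalIntegrable 0 1)
        (c8.intervalIntegrable 0 1),
      intervalIntegral.integral_add ((c5.fun_add c6).intervalIntegrable 0 1)
        (c7.intervalIntegrable 0 1),
      intervalIntegral.integral_add (c5.intervalIntegrable 0 1) (c6.intervalIntegrable 0 1),
      intervalIntegral.integral_const_mul, intervalIntegral.integral_const_mul,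
      intervalIntegral.integral_const_mul, intervalIntegral.integral_const_mul]
  have hI1nn : 0 ≤ I1 := intervalIntegral.integral_nonneg zero_le_one
    (fun x _ => Real.rpow_nonneg (hmpos x).le _)
  have hI2nn : 0 ≤ I2 := intervalIntegral.integral_nonneg zero_le_one
    (fun x _ => mul_nonneg (hmpos x).le (Real.rpow_nonneg (abs_nonneg _) _))
  have hI3nn : 0 ≤ I3 := intervalIntegral.integral_nonneg zero_le_one
    (fun x _ => Real.rpow_nonneg (abs_nonneg _) _)
  have hI4nn : 0 ≤ I4 := intervalIntegral.integral_nonneg zero_le_one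
    (fun x _ => by simp only [hQdef]; positivity)
  rw [hGsplit] at hGle
  -- individual bounds
  have hp2 : 0 ≤ tC2 * I2 := mul_nonneg htC2.le hI2nn
  have hp3 : 0 ≤ C2 * I3 := mul_nonneg hC2.le hI3nn
  have hp4 : 0 ≤ ε * I4 := mul_nonneg hε.le hI4nn
  have hb1 : I1 ≤ 2 * M₀ := by linarith
  have hb2 : I2 ≤ M₀ / tC2 := by rw [le_div_iff₀ htC2]; linarith
  have hb3 : I3 ≤ M₀ / C2 := by rw [le_div_iff₀ hC2]; linarith
  have hb4 : ε * I4 ≤ M₀ := by linarith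
  -- reassemble the target
  have htarget2 : (∫ x in (0:ℝ)..1, |deriv u x| ^ γ * (1 + m x)) = I3 + I2 := by
    have : (∫ x in (0:ℝ)..1, |deriv u x| ^ γ * (1 + m x))
        = ∫ x in (0:ℝ)..1, (|deriv u x| ^ γ + m x * |deriv u x| ^ γ) := by
      apply intervalIntegral.integral_congr
      intro x _; ring
    rw [this, intervalIntegral.integral_add (cabs.intervalIntegrable 0 1)
      ((cm.fun_mul cabs).intervalIntegrable 0 1)]
  rw [htarget2]
  have hQeq : ε * (∫ x in (0:ℝ)..1,
      ((u x) ^ 2 + (m x) ^ 2 + (deriv u x) ^ 2 + (deriv m x) ^ 2)) = ε * I4 := by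
    rfl
  rw [hQeq]
  have hC2' : M₀ / C2 = 1/C2 * M₀ := by ring
  have htC2' : M₀ / tC2 = 1/tC2 * M₀ := by ring
  linarith [hb1, hb2, hb3, hb4, hM₀]
end
end

section
/- Suppose assumptions (A1) and (A2) hold. Then there exists a constant C > 0, depending only on γ, α, the constants C1, C2, C3, C̃1, C̃2, C̃3 of (A1)–(A2), and on sup|V|, such that for every 0 < ε ≤ 1 and every solution (u, m) of Problem 1, one has ∫₀¹ m dx ≤ C. -/
open Set intervalIntegral

noncomputable section

/-! ### Auxiliary material for the proof -/

/-- Integral over one period. -/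
def J (f : ℝ → ℝ) : ℝ := ∫ x in (0:ℝ)..1, f x

lemma Jadd {f g : ℝ → ℝ} (hf : Continuous f) (hg : Continuous g) :
    J (fun x => f x + g x) = J f + J g :=
  intervalIntegral.integral_add (hf.intervalIntegrable 0 1) (hg.intervalIntegrable 0 1)

lemma Jsub {f g : ℝ → ℝ} (hf : Continuous f) (hg : Continuous g) :
    J (fun x => f x - g x) = J f - J g :=
  intervalIntegral.integral_sub (hf.intervalIntegrable 0 1) (hg.intervalIntegrable 0 1)

lemma Jsmul (c : ℝ) (f : ℝ → ℝ) : J (fun x => c * f x) = c * J f :=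
  intervalIntegral.integral_const_mul c f

lemma Jconst (c : ℝ) : J (fun _ => c) = c := by
  simp [J]

lemma Jmono {f g : ℝ → ℝ} (hf : Continuous f) (hg : Continuous g)
    (h : ∀ x, f x ≤ g x) : J f ≤ J g :=
  intervalIntegral.integral_mono_on zero_le_one (hf.intervalIntegrable 0 1)
    (hg.intervalIntegrable 0 1) (fun x _ => h x)

lemma Jnonneg {f : ℝ → ℝ} (hf : Continuous f) (h : ∀ x, 0 ≤ f x) : 0 ≤ J f := by
  have := Jmono continuous_const hf h
  rwa [Jconst] at this

lemma my_periodic_deriv {f : ℝ → ℝ} (hf : Function.Periodic f 1) :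
    Function.Periodic (deriv f) 1 := by
  intro x
  have h1 : (fun y => f (y + 1)) = f := funext hf
  calc deriv f (x + 1) = deriv (fun y => f (y + 1)) x := (deriv_comp_add_const f 1 x).symm
  _ = deriv f x := by rw [h1]

lemma my_c2_deriv {f : ℝ → ℝ} (hf : ContDiff ℝ 2 f) : ContDiff ℝ 1 (deriv f) := by
  have h2 : (2 : WithTop ℕ∞) = 1 + 1 := by norm_num
  exact (contDiff_succ_iff_deriv.mp (h2 ▸ hf)).2.2

lemma my_c1_infra {f : ℝ → ℝ} (hf : ContDiff ℝ 1 f) :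
    (∀ x, HasDerivAt f (deriv f x) x) ∧ Continuous (deriv f) := by
  obtain ⟨hd, hc⟩ := contDiff_one_iff_deriv.mp hf
  exact ⟨fun x => (hd x).hasDerivAt, hc⟩

lemma my_int_deriv_zero {f f' : ℝ → ℝ} (hd : ∀ x, HasDerivAt f (f' x) x)
    (hc : Continuous f') (hp : Function.Periodic f 1) : J f' = 0 := by
  unfold J
  rw [intervalIntegral.integral_eq_sub_of_hasDerivAt (fun x _ => hd x)
    (hc.intervalIntegrable 0 1)]
  have := hp 0
  simp only [zero_add] at this
  rw [this, sub_self]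

lemma my_parts {f g f' g' : ℝ → ℝ} (hdf : ∀ x, HasDerivAt f (f' x) x)
    (hdg : ∀ x, HasDerivAt g (g' x) x) (hcf' : Continuous f') (hcg' : Continuous g')
    (hpf : Function.Periodic f 1) (hpg : Function.Periodic g 1) :
    J (fun x => f' x * g x) = -J (fun x => f x * g' x) := by
  have hcf : Continuous f :=
    continuous_iff_continuousAt.mpr fun x => (hdf x).continuousAt
  have hcg : Continuous g :=
    continuous_iff_continuousAt.mpr fun x => (hdg x).continuousAt
  have key := intervalIntegral.integral_deriv_mul_eq_sub (a := 0) (b := 1)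
    (fun x _ => hdf x) (fun x _ => hdg x)
    (hcf'.intervalIntegrable 0 1) (hcg'.intervalIntegrable 0 1)
  rw [intervalIntegral.integral_add (f := fun x => f' x * g x) (g := fun x => f x * g' x) ((hcf'.mul hcg).intervalIntegrable 0 1)
    ((hcf.mul hcg').intervalIntegrable 0 1)] at key
  have h1 : f 1 = f 0 := by have := hpf 0; simpa using this
  have h2 : g 1 = g 0 := by have := hpg 0; simpa using this
  rw [h1, h2] at key
  unfold J
  linarith

lemma my_rpow_bound1 {α δ t : ℝ} (hα : 0 < α) (hδ : 0 < δ) (ht : 0 < t) :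
    t ^ α ≤ δ * t ^ (α + 1) + δ ^ (-α) := by
  have hδα : (0:ℝ) ≤ δ ^ (-α) := Real.rpow_nonneg hδ.le _
  have htα : (0:ℝ) ≤ t ^ α := Real.rpow_nonneg ht.le _
  have hts : (0:ℝ) ≤ δ * t ^ (α + 1) :=
    mul_nonneg hδ.le (Real.rpow_nonneg ht.le _)
  rcases le_or_gt 1 (δ * t) with h | h
  · have : t ^ α * 1 ≤ t ^ α * (δ * t) := mul_le_mul_of_nonneg_left h htα
    rw [Real.rpow_add_one ht.ne']
    nlinarith
  · have ht' : t ≤ 1 / δ := ((lt_div_iff₀' hδ).mpr h).le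
    have h2 : t ^ α ≤ (1 / δ) ^ α := Real.rpow_le_rpow ht.le ht' hα.le
    have h3 : ((1:ℝ) / δ) ^ α = δ ^ (-α) := by
      rw [one_div, Real.inv_rpow hδ.le, Real.rpow_neg hδ.le]
    linarith [h3 ▸ h2]

lemma my_rpow_bound2 {α δ t : ℝ} (hα : 0 < α) (hδ : 0 < δ) (ht : 0 < t) :
    t ≤ δ * t ^ (α + 1) + δ ^ (-α⁻¹) := by
  have hδα : (0:ℝ) ≤ δ ^ (-α⁻¹) := Real.rpow_nonneg hδ.le _
  have hts : (0:ℝ) ≤ δ * t ^ (α + 1) :=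
    mul_nonneg hδ.le (Real.rpow_nonneg ht.le _)
  rcases le_or_gt 1 (δ * t ^ α) with h | h
  · have : 1 * t ≤ (δ * t ^ α) * t := mul_le_mul_of_nonneg_right h ht.le
    rw [Real.rpow_add_one ht.ne']
    nlinarith
  · have ht' : t ^ α ≤ 1 / δ := ((lt_div_iff₀' hδ).mpr h).le
    have h2 : (t ^ α) ^ α⁻¹ ≤ ((1:ℝ) / δ) ^ α⁻¹ :=
      Real.rpow_le_rpow (Real.rpow_nonneg ht.le _) ht' (inv_nonneg.mpr hα.le)
    have h3 : (t ^ α) ^ α⁻¹ = t := by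
      rw [← Real.rpow_mul ht.le, mul_inv_cancel₀ hα.ne', Real.rpow_one]
    have h4 : ((1:ℝ) / δ) ^ α⁻¹ = δ ^ (-α⁻¹) := by
      rw [one_div, Real.inv_rpow hδ.le, Real.rpow_neg hδ.le]
    rw [h3, h4] at h2
    linarith

/-- Under assumptions (A1)–(A2), there is a constant `C > 0`,
depending only on `γ, α`, the constants of (A1)–(A2) and on `sup |V|`, such
that for every `0 < ε ≤ 1` and every solution `(u, m)` of Problem 1,
`∫₀¹ m ≤ C`. -/
theorem mass_bound
    (α γ C1 C2 C3 tC1 tC2 tC3 KV : ℝ)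
    (hα : 0 < α) (hγ : 1 < γ)
    (hC1 : 0 < C1) (hC2 : 0 < C2) (hC3 : 0 < C3)
    (htC1 : 0 < tC1) (htC2 : 0 < tC2) (htC3 : 0 < tC3) :
    ∃ C > 0, ∀ H V : ℝ → ℝ, ContDiff ℝ 2 H → Continuous V →
      Function.Periodic V 1 → (∀ x, |V x| ≤ KV) →
      (∀ p : ℝ, -C1 + C2 * |p| ^ γ ≤ H p ∧ H p ≤ C1 + C3 * |p| ^ γ) →
      (∀ p : ℝ, -tC1 + tC2 * |p| ^ γ ≤ p * deriv H p - H p ∧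
          p * deriv H p - H p ≤ tC1 + tC3 * |p| ^ γ) →
      ∀ ε : ℝ, 0 < ε → ε ≤ 1 → ∀ u m : ℝ → ℝ, SolvesMFG H V α ε u m →
        (∫ x in (0:ℝ)..1, m x) ≤ C := by
  obtain ⟨K', hK'def⟩ : ∃ x : ℝ, x = max KV 0 := ⟨_, rfl⟩
  obtain ⟨K0, hK0def⟩ : ∃ x : ℝ, x = 1 + tC1 + K' := ⟨_, rfl⟩
  obtain ⟨δ, hδdef⟩ : ∃ x : ℝ, x = (2 * (1 + K0))⁻¹ := ⟨_, rfl⟩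
  obtain ⟨B1, hB1def⟩ : ∃ x : ℝ, x = δ ^ (-α) + K0 * δ ^ (-α⁻¹) + C1 + K' := ⟨_, rfl⟩
  have hK'0 : 0 ≤ K' := hK'def ▸ le_max_right _ _
  have hK0pos : 0 < K0 := by rw [hK0def]; linarith
  have hδpos : 0 < δ := by rw [hδdef]; positivity
  have hra : 0 < δ ^ (-α) := Real.rpow_pos_of_pos hδpos _
  have hrb : 0 < δ ^ (-α⁻¹) := Real.rpow_pos_of_pos hδpos _
  have hB1pos : 0 < B1 := by
    rw [hB1def]
    have := mul_pos hK0pos hrb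
    linarith
  refine ⟨δ * (2 * B1) + δ ^ (-α⁻¹) + 1, by nlinarith [mul_pos hδpos hB1pos], ?_⟩
  intro H V hH hV hVper hVb hA1 hA2 ε hε hε1 u m hsol
  obtain ⟨⟨pu, hu⟩, ⟨pm, hm⟩, hmpos, e1, e2⟩ := hsol
  -- infrastructure
  have hu1 : ContDiff ℝ 1 (deriv u) := my_c2_deriv hu
  have hm1 : ContDiff ℝ 1 (deriv m) := my_c2_deriv hm
  have hH1 : ContDiff ℝ 1 (deriv H) := my_c2_deriv hH
  obtain ⟨du, cu1⟩ := my_c1_infra (hu.of_le (by norm_num))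
  obtain ⟨dm, cm1⟩ := my_c1_infra (hm.of_le (by norm_num))
  obtain ⟨du1, cu2⟩ := my_c1_infra hu1
  obtain ⟨dm1, cm2⟩ := my_c1_infra hm1
  have cu : Continuous u := hu.continuous
  have cm : Continuous m := hm.continuous
  have pu1 : Function.Periodic (deriv u) 1 := my_periodic_deriv pu
  have pm1 : Function.Periodic (deriv m) 1 := my_periodic_deriv pm
  have hg : ContDiff ℝ 1 (fun y => deriv H (deriv u y) * m y) :=
    (hH1.comp hu1).mul (hm.of_le (by norm_num))
  obtain ⟨dg, cg1⟩ := my_c1_infra hg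
  have cg : Continuous (fun y => deriv H (deriv u y) * m y) := hg.continuous
  have pg : Function.Periodic (fun y => deriv H (deriv u y) * m y) 1 := by
    intro x
    simp only
    rw [pu1 x, pm x]
  -- continuity of composite terms
  have cHu : Continuous (fun x => H (deriv u x)) := hH.continuous.comp cu1
  have cmα : Continuous (fun x => m x ^ α) :=
    cm.rpow_const (fun x => Or.inl (hmpos x).ne')
  have cmα1 : Continuous (fun x => m x ^ (α + 1)) :=
    cm.rpow_const (fun x => Or.inl (hmpos x).ne')
  -- vanishing integrals of derivatives
  have F1 : J (deriv (deriv u)) = 0 := my_int_deriv_zero du1 cu2 pu1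
  have F2 : J (deriv (deriv m)) = 0 := my_int_deriv_zero dm1 cm2 pm1
  -- integration by parts facts
  have Pm2u : J (fun x => deriv (deriv m) x * u x)
      = -J (fun x => deriv m x * deriv u x) := my_parts dm1 du cm2 cu1 pm1 pu
  have Pu2m : J (fun x => deriv (deriv u) x * m x)
      = -J (fun x => deriv u x * deriv m x) := my_parts du1 dm cu2 cm1 pu1 pm
  have Pswap : J (fun x => deriv m x * deriv u x) = J (fun x => deriv u x * deriv m x) := by
    congr 1; funext x; ring
  have Pm2m : J (fun x => deriv (deriv m) x * m x)
      = -J (fun x => deriv m x * deriv m x) := my_parts dm1 dm cm2 cm1 pm1 pm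
  have Pu2u : J (fun x => deriv (deriv u) x * u x)
      = -J (fun x => deriv u x * deriv u x) := my_parts du1 du cu2 cu1 pu1 pu
  have Pg : J (fun x => deriv (fun y => deriv H (deriv u y) * m y) x * u x)
      = -J (fun x => (deriv H (deriv u x) * m x) * deriv u x) :=
    my_parts dg du cg1 cu1 pg pu
  -- Fact A : integrated first equation
  have eA : ∀ x, u x + H (deriv u x) + V x + ε * deriv (deriv m) x
      = m x ^ α + ε * m x + deriv (deriv u) x := by
    intro x; have h := e1 x; linarith
  have GA : J u + J (fun x => H (deriv u x)) + J V + ε * J (deriv (deriv m))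
      = J (fun x => m x ^ α) + ε * J m + J (deriv (deriv u)) := by
    have s1 : J (fun x => u x + H (deriv u x)) = J u + J (fun x => H (deriv u x)) :=
      Jadd cu cHu
    have s2 : J (fun x => u x + H (deriv u x) + V x)
        = J (fun x => u x + H (deriv u x)) + J V := Jadd (cu.add cHu) hV
    have s3 : J (fun x => u x + H (deriv u x) + V x + ε * deriv (deriv m) x)
        = J (fun x => u x + H (deriv u x) + V x) + J (fun x => ε * deriv (deriv m) x) :=
      Jadd ((cu.add cHu).add hV) (continuous_const.mul cm2)
    have s4 : J (fun x => ε * deriv (deriv m) x) = ε * J (deriv (deriv m)) :=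
      Jsmul ε _
    have t1 : J (fun x => m x ^ α + ε * m x) = J (fun x => m x ^ α) + ε * J m := by
      rw [Jadd (g := fun x => ε * m x) cmα (continuous_const.mul cm), Jsmul]
    have t2 : J (fun x => m x ^ α + ε * m x + deriv (deriv u) x)
        = J (fun x => m x ^ α + ε * m x) + J (deriv (deriv u)) :=
      Jadd (cmα.add (continuous_const.mul cm)) cu2
    have main : J (fun x => u x + H (deriv u x) + V x + ε * deriv (deriv m) x)
        = J (fun x => m x ^ α + ε * m x + deriv (deriv u) x) := by
      congr 1; funext x; exact eA x
    rw [s3, s2, s1, s4, t2, t1] at main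
    linarith only [main]
  -- Fact B : the duality identity (eq1 * m minus eq2 * u, integrated)
  have eB : ∀ x, H (deriv u x) * m x + V x * m x + ε * (deriv (deriv m) x * m x)
      + deriv (deriv m) x * u x + deriv (fun y => deriv H (deriv u y) * m y) x * u x
      + u x + ε * (deriv (deriv u) x * u x)
      = m x ^ (α + 1) + ε * (m x * m x) + ε * (u x * u x)
      + deriv (deriv u) x * m x := by
    intro x
    have h1 := e1 x
    have h2 := e2 x
    have h3 : m x ^ (α + 1) = m x ^ α * m x := Real.rpow_add_one (hmpos x).ne' α
    linear_combination (m x) * h1 - (u x) * h2 - h3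
  have GB : J (fun x => H (deriv u x) * m x) + J (fun x => V x * m x)
      + ε * J (fun x => deriv (deriv m) x * m x)
      + J (fun x => deriv (deriv m) x * u x)
      + J (fun x => deriv (fun y => deriv H (deriv u y) * m y) x * u x)
      + J u + ε * J (fun x => deriv (deriv u) x * u x)
      = J (fun x => m x ^ (α + 1)) + ε * J (fun x => m x * m x)
      + ε * J (fun x => u x * u x) + J (fun x => deriv (deriv u) x * m x) := by
    have c1 : Continuous (fun x => H (deriv u x) * m x) := cHu.mul cm
    have c2 : Continuous (fun x => V x * m x) := hV.mul cm
    have c3 : Continuous (fun x => ε * (deriv (deriv m) x * m x)) :=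
      continuous_const.mul (cm2.mul cm)
    have c4 : Continuous (fun x => deriv (deriv m) x * u x) := cm2.mul cu
    have c5 : Continuous (fun x => deriv (fun y => deriv H (deriv u y) * m y) x * u x) :=
      cg1.mul cu
    have c7 : Continuous (fun x => ε * (deriv (deriv u) x * u x)) :=
      continuous_const.mul (cu2.mul cu)
    have d2 : Continuous (fun x => ε * (m x * m x)) := continuous_const.mul (cm.mul cm)
    have d3 : Continuous (fun x => ε * (u x * u x)) := continuous_const.mul (cu.mul cu)
    have d4 : Continuous (fun x => deriv (deriv u) x * m x) := cu2.mul cm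
    have s1 : J (fun x => H (deriv u x) * m x + V x * m x)
        = J (fun x => H (deriv u x) * m x) + J (fun x => V x * m x) := Jadd c1 c2
    have s2 : J (fun x => H (deriv u x) * m x + V x * m x
          + ε * (deriv (deriv m) x * m x))
        = J (fun x => H (deriv u x) * m x + V x * m x)
          + J (fun x => ε * (deriv (deriv m) x * m x)) := Jadd (c1.add c2) c3
    have s3 : J (fun x => H (deriv u x) * m x + V x * m x
          + ε * (deriv (deriv m) x * m x) + deriv (deriv m) x * u x)
        = J (fun x => H (deriv u x) * m x + V x * m x + ε * (deriv (deriv m) x * m x))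
          + J (fun x => deriv (deriv m) x * u x) := Jadd ((c1.add c2).add c3) c4
    have s4 : J (fun x => H (deriv u x) * m x + V x * m x
          + ε * (deriv (deriv m) x * m x) + deriv (deriv m) x * u x
          + deriv (fun y => deriv H (deriv u y) * m y) x * u x)
        = J (fun x => H (deriv u x) * m x + V x * m x + ε * (deriv (deriv m) x * m x)
            + deriv (deriv m) x * u x)
          + J (fun x => deriv (fun y => deriv H (deriv u y) * m y) x * u x) :=
      Jadd (((c1.add c2).add c3).add c4) c5
    have s5 : J (fun x => H (deriv u x) * m x + V x * m x
          + ε * (deriv (deriv m) x * m x) + deriv (deriv m) x * u x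
          + deriv (fun y => deriv H (deriv u y) * m y) x * u x + u x)
        = J (fun x => H (deriv u x) * m x + V x * m x + ε * (deriv (deriv m) x * m x)
            + deriv (deriv m) x * u x
            + deriv (fun y => deriv H (deriv u y) * m y) x * u x)
          + J u := Jadd ((((c1.add c2).add c3).add c4).add c5) cu
    have s6 : J (fun x => H (deriv u x) * m x + V x * m x
          + ε * (deriv (deriv m) x * m x) + deriv (deriv m) x * u x
          + deriv (fun y => deriv H (deriv u y) * m y) x * u x + u x
          + ε * (deriv (deriv u) x * u x))
        = J (fun x => H (deriv u x) * m x + V x * m x + ε * (deriv (deriv m) x * m x)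
            + deriv (deriv m) x * u x
            + deriv (fun y => deriv H (deriv u y) * m y) x * u x + u x)
          + J (fun x => ε * (deriv (deriv u) x * u x)) :=
      Jadd (((((c1.add c2).add c3).add c4).add c5).add cu) c7
    have t1 : J (fun x => m x ^ (α + 1) + ε * (m x * m x))
        = J (fun x => m x ^ (α + 1)) + J (fun x => ε * (m x * m x)) := Jadd cmα1 d2
    have t2 : J (fun x => m x ^ (α + 1) + ε * (m x * m x) + ε * (u x * u x))
        = J (fun x => m x ^ (α + 1) + ε * (m x * m x)) + J (fun x => ε * (u x * u x)) :=
      Jadd (cmα1.add d2) d3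
    have t3 : J (fun x => m x ^ (α + 1) + ε * (m x * m x) + ε * (u x * u x)
          + deriv (deriv u) x * m x)
        = J (fun x => m x ^ (α + 1) + ε * (m x * m x) + ε * (u x * u x))
          + J (fun x => deriv (deriv u) x * m x) := Jadd ((cmα1.add d2).add d3) d4
    have main : J (fun x => H (deriv u x) * m x + V x * m x
          + ε * (deriv (deriv m) x * m x) + deriv (deriv m) x * u x
          + deriv (fun y => deriv H (deriv u y) * m y) x * u x + u x
          + ε * (deriv (deriv u) x * u x))
        = J (fun x => m x ^ (α + 1) + ε * (m x * m x) + ε * (u x * u x)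
            + deriv (deriv u) x * m x) := by
      congr 1; funext x; exact eB x
    rw [s6, s5, s4, s3, s2, s1, t3, t2, t1, Jsmul, Jsmul, Jsmul, Jsmul] at main
    linarith only [main]
  -- basic sign facts
  have Jm_nonneg : 0 ≤ J m := Jnonneg cm (fun x => (hmpos x).le)
  have JA_nonneg : 0 ≤ J (fun x => m x ^ α) :=
    Jnonneg cmα (fun x => Real.rpow_nonneg (hmpos x).le _)
  have JX_nonneg : 0 ≤ J (fun x => m x ^ (α + 1)) :=
    Jnonneg cmα1 (fun x => Real.rpow_nonneg (hmpos x).le _)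
  have Jmm_nonneg : 0 ≤ J (fun x => m x * m x) :=
    Jnonneg (cm.mul cm) (fun x => mul_self_nonneg _)
  have Juu_nonneg : 0 ≤ J (fun x => u x * u x) :=
    Jnonneg (cu.mul cu) (fun x => mul_self_nonneg _)
  have Jm1m1_nonneg : 0 ≤ J (fun x => deriv m x * deriv m x) :=
    Jnonneg (cm1.mul cm1) (fun x => mul_self_nonneg _)
  have Ju1u1_nonneg : 0 ≤ J (fun x => deriv u x * deriv u x) :=
    Jnonneg (cu1.mul cu1) (fun x => mul_self_nonneg _)
  -- bound J H(u') from below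
  have JH_lb : -C1 ≤ J (fun x => H (deriv u x)) := by
    have := Jmono (f := fun _ => -C1) continuous_const cHu (fun x => by
      show -C1 ≤ H (deriv u x)
      have h := (hA1 (deriv u x)).1
      have h0 : 0 ≤ C2 * |deriv u x| ^ γ :=
        mul_nonneg hC2.le (Real.rpow_nonneg (abs_nonneg _) _)
      linarith)
    rwa [Jconst] at this
  -- bound J V from below
  have JV_lb : -K' ≤ J V := by
    have := Jmono (f := fun _ => -K') continuous_const hV (fun x => by
      show -K' ≤ V x
      have h := hVb x
      have h2 : KV ≤ K' := hK'def ▸ le_max_left _ _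
      have h3 : -|V x| ≤ V x := neg_abs_le _
      linarith)
    rwa [Jconst] at this
  -- bound J (V m)
  have JVm_ub : J (fun x => V x * m x) ≤ K' * J m := by
    have := Jmono (hV.mul cm) (g := fun x => K' * m x) (continuous_const.mul cm) (fun x => by
      have h : V x ≤ K' := le_trans (le_trans (le_abs_self _) (hVb x)) (hK'def ▸ le_max_left _ _)
      exact mul_le_mul_of_nonneg_right h (hmpos x).le)
    rwa [Jsmul] at this
  -- Lagrangian-type bound : ∫ (H'(u')u' - H(u')) m ≥ -tC1 ∫ m
  have JLag : -(tC1 * J m) ≤ J (fun x => (deriv H (deriv u x) * m x) * deriv u x)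
      - J (fun x => H (deriv u x) * m x) := by
    have hpt : ∀ x, -tC1 * m x
        ≤ (deriv H (deriv u x) * m x) * deriv u x - H (deriv u x) * m x := by
      intro x
      have h := (hA2 (deriv u x)).1
      have h0 : 0 ≤ tC2 * |deriv u x| ^ γ :=
        mul_nonneg htC2.le (Real.rpow_nonneg (abs_nonneg _) _)
      have h1 : -tC1 ≤ deriv u x * deriv H (deriv u x) - H (deriv u x) := by linarith
      have h2 := mul_le_mul_of_nonneg_right h1 (hmpos x).le
      have h3 : (deriv u x * deriv H (deriv u x) - H (deriv u x)) * m x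
          = (deriv H (deriv u x) * m x) * deriv u x - H (deriv u x) * m x := by ring
      linarith only [h2, h3]
    have := Jmono (f := fun x => -tC1 * m x)
      (g := fun x => (deriv H (deriv u x) * m x) * deriv u x - H (deriv u x) * m x)
      (continuous_const.mul cm)
      (((((hH1.continuous.comp cu1).mul cm).mul cu1).sub (cHu.mul cm))) hpt
    rw [Jsmul,
      Jsub (f := fun x => (deriv H (deriv u x) * m x) * deriv u x)
        (g := fun x => H (deriv u x) * m x)
        (((hH1.continuous.comp cu1).mul cm).mul cu1) (cHu.mul cm)] at this
    linarith only [this]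
  -- products with ε
  have q1 : ε * J (fun x => deriv (deriv m) x * m x) ≤ 0 := by
    rw [Pm2m, mul_neg, neg_nonpos]
    exact mul_nonneg hε.le Jm1m1_nonneg
  have q2 : ε * J (fun x => deriv (deriv u) x * u x) ≤ 0 := by
    rw [Pu2u, mul_neg, neg_nonpos]
    exact mul_nonneg hε.le Ju1u1_nonneg
  have q3 : 0 ≤ ε * J (fun x => m x * m x) := mul_nonneg hε.le Jmm_nonneg
  have q4 : 0 ≤ ε * J (fun x => u x * u x) := mul_nonneg hε.le Juu_nonneg
  have q5 : ε * J m ≤ J m := mul_le_of_le_one_left Jm_nonneg hε1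
  have q6 : ε * J (deriv (deriv m)) = 0 := by rw [F2]; ring
  -- the two sides of parts cancel
  have q7 : J (fun x => deriv (deriv m) x * u x) = J (fun x => deriv (deriv u) x * m x) := by
    rw [Pm2u, Pu2m, Pswap]
  -- upper bound on J u
  have Ju_ub : J u ≤ J (fun x => m x ^ α) + J m + C1 + K' := by
    rw [F1, q6] at GA
    linarith only [GA, JH_lb, JV_lb, q5, JA_nonneg]
  -- upper bound on J X
  have JX_ub : J (fun x => m x ^ (α + 1))
      ≤ J u + K' * J m + tC1 * J m := by
    have hPg := Pg
    linarith only [GB, q1, q2, q3, q4, q7, JVm_ub, JLag, hPg]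
  -- power bounds
  have JA_ub : J (fun x => m x ^ α)
      ≤ δ * J (fun x => m x ^ (α + 1)) + δ ^ (-α) := by
    have := Jmono cmα (g := fun x => δ * m x ^ (α + 1) + δ ^ (-α))
      ((continuous_const.mul cmα1).add continuous_const)
      (fun x => my_rpow_bound1 hα hδpos (hmpos x))
    rwa [Jadd (f := fun x => δ * m x ^ (α + 1)) (g := fun _ => δ ^ (-α)) (continuous_const.mul cmα1) continuous_const, Jsmul, Jconst] at this
  have Jm_ub : J m ≤ δ * J (fun x => m x ^ (α + 1)) + δ ^ (-α⁻¹) := by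
    have := Jmono cm (g := fun x => δ * m x ^ (α + 1) + δ ^ (-α⁻¹))
      ((continuous_const.mul cmα1).add continuous_const)
      (fun x => my_rpow_bound2 hα hδpos (hmpos x))
    rwa [Jadd (f := fun x => δ * m x ^ (α + 1)) (g := fun _ => δ ^ (-α⁻¹)) (continuous_const.mul cmα1) continuous_const, Jsmul, Jconst] at this
  -- combine
  have hδeq : δ * (1 + K0) = 1 / 2 := by
    rw [hδdef]
    have h1K0 : (1 + K0) ≠ 0 := by positivity
    field_simp
  have hK0Jm : K0 * J m ≤ K0 * (δ * J (fun x => m x ^ (α + 1)) + δ ^ (-α⁻¹)) :=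
    mul_le_mul_of_nonneg_left Jm_ub hK0pos.le
  have hcomb : δ * J (fun x => m x ^ (α + 1))
      + K0 * (δ * J (fun x => m x ^ (α + 1)) + δ ^ (-α⁻¹))
      = (1 / 2) * J (fun x => m x ^ (α + 1)) + K0 * δ ^ (-α⁻¹) := by
    linear_combination J (fun x => m x ^ (α + 1)) * hδeq
  have hK0Jm_eq : K0 * J m = J m + tC1 * J m + K' * J m := by
    rw [hK0def]; ring
  have JX_final : J (fun x => m x ^ (α + 1)) ≤ 2 * B1 := by
    rw [hB1def]
    linarith only [JX_ub, Ju_ub, JA_ub, hK0Jm, hcomb, hK0Jm_eq]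
  have hfin : δ * J (fun x => m x ^ (α + 1)) ≤ δ * (2 * B1) :=
    mul_le_mul_of_nonneg_left JX_final hδpos.le
  show J m ≤ _
  linarith only [Jm_ub, hfin]
end
end

section
/- Suppose assumptions (A1), (A2), (A3), (A4), and (A5) hold. Then for every 0 < ε ≤ 1 and every solution (u, m) of Problem 1, the second derivatives u'' and m'' are ½-Hölder continuous; that is, (u, m) ∈ C^{2,1/2}(𝕋) × C^{2,1/2}(𝕋). -/
open Set intervalIntegral

noncomputable section

section AuxHolder
open Filter
open Set Filter

lemma periodic_deriv_of_periodic {f : ℝ → ℝ} (h : Function.Periodic f 1) :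
    Function.Periodic (deriv f) 1 := by
  intro x
  have hfe : (fun y : ℝ => f (y + 1)) = f := funext h
  rw [← deriv_comp_add_const (f := f) (a := 1) (x := x), hfe]

lemma bounded_of_periodic_continuous {f : ℝ → ℝ} (h : Function.Periodic f 1)
    (hc : Continuous f) : ∃ M : ℝ, 0 ≤ M ∧ ∀ x, |f x| ≤ M := by
  obtain ⟨M, hM⟩ := (isCompact_Icc (a := (0:ℝ)) (b := 1)).exists_bound_of_continuousOn
    hc.continuousOn
  refine ⟨M, le_trans (abs_nonneg _) (by simpa using hM 0 (by norm_num)), fun x => ?_⟩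
  have hfr : f (Int.fract x) = f x := by
    have h2 := h.sub_int_mul_eq (x := x) (n := ⌊x⌋)
    rw [mul_one] at h2
    rw [Int.fract]
    exact h2
  rw [← hfr]
  simpa using hM (Int.fract x) ⟨Int.fract_nonneg x, (Int.fract_lt_one x).le⟩

lemma deriv_nonneg_of_monotone {g : ℝ → ℝ} {x : ℝ} (hm : Monotone g)
    (hd : DifferentiableAt ℝ g x) : 0 ≤ deriv g x := by
  have h := hd.hasDerivAt
  rw [hasDerivAt_iff_tendsto_slope] at h
  have h' : Tendsto (slope g x) (nhdsWithin x (Ioi x)) (nhds (deriv g x)) :=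
    h.mono_left (nhdsWithin_mono x (fun y hy => by
      simpa using ne_of_gt hy))
  refine ge_of_tendsto h' ?_
  filter_upwards [self_mem_nhdsWithin] with y hy
  rw [slope_def_field]
  exact div_nonneg (sub_nonneg.2 (hm (le_of_lt hy))) (sub_nonneg.2 (le_of_lt hy))

lemma isHolderHalf_of_c1_periodic {f : ℝ → ℝ} (hper : Function.Periodic f 1)
    (hf : ContDiff ℝ 1 f) :
    ∃ K : ℝ, 0 ≤ K ∧ ∀ x y : ℝ, |f x - f y| ≤ K * |x - y| ^ ((1 : ℝ) / 2) := by
  obtain ⟨hdiff, hcont⟩ := contDiff_one_iff_deriv.mp hf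
  obtain ⟨M, hM0, hM⟩ := bounded_of_periodic_continuous hper hf.continuous
  obtain ⟨L, hL0, hL⟩ := bounded_of_periodic_continuous (periodic_deriv_of_periodic hper) hcont
  have hlip : LipschitzWith L.toNNReal f := by
    apply lipschitzWith_of_nnnorm_deriv_le hdiff
    intro x
    simpa [← NNReal.coe_le_coe, Real.norm_eq_abs, Real.coe_toNNReal L hL0] using hL x
  have hlipR : ∀ x y : ℝ, |f x - f y| ≤ L * |x - y| := by
    intro x y
    have := hlip.dist_le_mul x y
    simpa [Real.dist_eq, Real.coe_toNNReal L hL0] using this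
  refine ⟨L + 2 * M, by positivity, fun x y => ?_⟩
  set t := |x - y| with ht
  have ht0 : 0 ≤ t := abs_nonneg _
  have htp : (0:ℝ) ≤ t ^ ((1:ℝ)/2) := Real.rpow_nonneg ht0 _
  rcases le_or_gt t 1 with h1 | h1
  · rcases eq_or_lt_of_le ht0 with h0 | h0
    · have hxy : x = y := by
        have : |x - y| = 0 := h0.symm
        have := abs_eq_zero.mp this
        linarith [sub_eq_zero.mp this]
      rw [hxy]
      simp [abs_nonneg]
      positivity
    · have hts : t ≤ t ^ ((1:ℝ)/2) := by
        have := Real.rpow_le_rpow_of_exponent_ge h0 h1 (by norm_num : (1:ℝ)/2 ≤ 1)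
        simpa [Real.rpow_one] using this
      calc |f x - f y| ≤ L * t := hlipR x y
        _ ≤ L * t ^ ((1:ℝ)/2) := by nlinarith
        _ ≤ (L + 2 * M) * t ^ ((1:ℝ)/2) := by nlinarith
  · have h1' : (1:ℝ) ≤ t ^ ((1:ℝ)/2) := Real.one_le_rpow h1.le (by norm_num)
    calc |f x - f y| ≤ |f x| + |f y| := abs_sub _ _
      _ ≤ 2 * M := by linarith [hM x, hM y]
      _ ≤ 2 * M * t ^ ((1:ℝ)/2) := by nlinarith
      _ ≤ (L + 2 * M) * t ^ ((1:ℝ)/2) := by nlinarith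

end AuxHolder

/-- Under assumptions (A1)–(A5), for every `0 < ε ≤ 1` and every
solution `(u, m)` of Problem 1, the second derivatives `u''` and `m''` are
½-Hölder continuous, i.e. `(u, m) ∈ C^{2,1/2}(𝕋) × C^{2,1/2}(𝕋)`. -/
theorem higher_regularity
    (α : ℝ) (hα : 0 < α)
    (H V : ℝ → ℝ) (hH : ContDiff ℝ 2 H)
    (hVper : Function.Periodic V 1)
    (γ C1 C2 C3 : ℝ) (hγ : 1 < γ) (hC1 : 0 < C1) (hC2 : 0 < C2) (hC3 : 0 < C3)
    (hA1 : ∀ p : ℝ, -C1 + C2 * |p| ^ γ ≤ H p ∧ H p ≤ C1 + C3 * |p| ^ γ)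
    (tC1 tC2 tC3 : ℝ) (htC1 : 0 < tC1) (htC2 : 0 < tC2) (htC3 : 0 < tC3)
    (hA2 : ∀ p : ℝ, -tC1 + tC2 * |p| ^ γ ≤ p * deriv H p - H p ∧
        p * deriv H p - H p ≤ tC1 + tC3 * |p| ^ γ)
    (hA3 : ContDiff ℝ 2 V)
    (hA4 : ConvexOn ℝ Set.univ H)
    (hA5 : ContDiff ℝ 4 H) :
    ∀ ε : ℝ, 0 < ε → ε ≤ 1 → ∀ u m : ℝ → ℝ, SolvesMFG H V α ε u m →
      IsHolderHalf (deriv (deriv u)) ∧ IsHolderHalf (deriv (deriv m)) := by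
  intro ε hε hε1 u m hs
  obtain ⟨⟨huper, hu2⟩, ⟨hmper, hm2⟩, hmpos, heq1, heq2⟩ := hs
  -- regularity of derivatives
  have hu'C1 : ContDiff ℝ 1 (deriv u) := by
    have h : ContDiff ℝ (1 + 1) u := by exact_mod_cast hu2
    exact (contDiff_succ_iff_deriv.mp h).2.2
  have hm'C1 : ContDiff ℝ 1 (deriv m) := by
    have h : ContDiff ℝ (1 + 1) m := by exact_mod_cast hm2
    exact (contDiff_succ_iff_deriv.mp h).2.2
  have hH'C3 : ContDiff ℝ 3 (deriv H) := by
    have h : ContDiff ℝ (3 + 1) H := by exact_mod_cast hA5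
    exact (contDiff_succ_iff_deriv.mp h).2.2
  have hH''C2 : ContDiff ℝ 2 (deriv (deriv H)) := by
    have h : ContDiff ℝ (2 + 1) (deriv H) := by exact_mod_cast hH'C3
    exact (contDiff_succ_iff_deriv.mp h).2.2
  have hu1 : ContDiff ℝ 1 u := hu2.of_le one_le_two
  have hm1 : ContDiff ℝ 1 m := hm2.of_le one_le_two
  -- H'' ≥ 0
  have hH'mono : Monotone (deriv H) := by
    have := hA4.monotoneOn_deriv (fun x _ => (hA5.differentiable (by norm_num)).differentiableAt)
    exact monotoneOn_univ.mp this
  have hH''nonneg : ∀ p : ℝ, 0 ≤ deriv (deriv H) p := fun p =>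
    deriv_nonneg_of_monotone hH'mono ((hH'C3.differentiable (by norm_num)).differentiableAt)
  -- derivative of the flux term
  have hP : ∀ x : ℝ, deriv (fun y => deriv H (deriv u y) * m y) x
      = deriv (deriv H) (deriv u x) * deriv (deriv u) x * m x
        + deriv H (deriv u x) * deriv m x := by
    intro x
    have h1 : HasDerivAt (deriv u) (deriv (deriv u) x) x :=
      ((hu'C1.differentiable one_ne_zero) x).hasDerivAt
    have h2 : HasDerivAt (deriv H) (deriv (deriv H) (deriv u x)) (deriv u x) :=
      ((hH'C3.differentiable (by norm_num)) (deriv u x)).hasDerivAt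
    have h3 : HasDerivAt (fun y => deriv H (deriv u y))
        (deriv (deriv H) (deriv u x) * deriv (deriv u) x) x := h2.comp x h1
    have h4 : HasDerivAt m (deriv m x) x := ((hm1.differentiable one_ne_zero) x).hasDerivAt
    exact (h3.mul h4).deriv
  -- denominator
  set den : ℝ → ℝ := fun x => 1 + ε ^ 2 + ε * deriv (deriv H) (deriv u x) * m x with hden_def
  have hden : ∀ x : ℝ, 0 < den x := by
    intro x
    have h1 := hH''nonneg (deriv u x)
    have h2 := hmpos x
    show 0 < 1 + ε ^ 2 + ε * deriv (deriv H) (deriv u x) * m x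
    positivity
  set g : ℝ → ℝ := fun x =>
    ((1 + ε ^ 2) * u x - ε + H (deriv u x) + V x - m x ^ α
      - ε * (deriv H (deriv u x) * deriv m x)) / den x with hg_def
  have hgu : ∀ x : ℝ, deriv (deriv u) x = g x := by
    intro x
    rw [hg_def]
    rw [eq_div_iff (ne_of_gt (hden x))]
    have e1 := heq1 x
    have e2 := heq2 x
    rw [hP x] at e2
    simp only [hden_def]
    nlinarith [e1, e2]
  -- C¹ regularity of g
  have hmα : ContDiff ℝ 1 (fun x => m x ^ α) := by
    rw [contDiff_iff_contDiffAt]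
    intro x
    exact (hm1.contDiffAt).rpow_const_of_ne (ne_of_gt (hmpos x))
  have hHu' : ContDiff ℝ 1 (fun x => H (deriv u x)) :=
    (hA5.of_le (by norm_num)).comp hu'C1
  have hH'u' : ContDiff ℝ 1 (fun x => deriv H (deriv u x)) :=
    (hH'C3.of_le (by norm_num)).comp hu'C1
  have hH''u' : ContDiff ℝ 1 (fun x => deriv (deriv H) (deriv u x)) :=
    (hH''C2.of_le one_le_two).comp hu'C1
  have hdenC1 : ContDiff ℝ 1 den := by
    exact contDiff_const.add ((contDiff_const.mul hH''u').mul hm1)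
  have hnumC1 : ContDiff ℝ 1 (fun x =>
      (1 + ε ^ 2) * u x - ε + H (deriv u x) + V x - m x ^ α
        - ε * (deriv H (deriv u x) * deriv m x)) := by
    exact (((((contDiff_const.mul hu1).sub contDiff_const).add hHu').add
      (hA3.of_le one_le_two)).sub hmα).sub (contDiff_const.mul (hH'u'.mul hm'C1))
  have hgC1 : ContDiff ℝ 1 g :=
    hnumC1.div hdenC1 (fun x => ne_of_gt (hden x))
  have hu''eq : deriv (deriv u) = g := funext hgu
  have hu''per : Function.Periodic (deriv (deriv u)) 1 :=
    periodic_deriv_of_periodic (periodic_deriv_of_periodic huper)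
  have hHu : IsHolderHalf (deriv (deriv u)) := by
    apply isHolderHalf_of_c1_periodic hu''per
    rw [hu''eq]; exact hgC1
  refine ⟨hHu, ?_⟩
  -- now m''
  set h : ℝ → ℝ := fun x =>
    m x - (u x - g x + H (deriv u x) + V x - m x ^ α) / ε with hh_def
  have hhm : ∀ x : ℝ, deriv (deriv m) x = h x := by
    intro x
    have e1 := heq1 x
    rw [hgu x] at e1
    rw [hh_def]
    field_simp
    nlinarith [e1]
  have hhC1 : ContDiff ℝ 1 h := by
    refine hm1.sub (ContDiff.div_const ?_ ε)
    exact (((hu1.sub hgC1).add hHu').add (hA3.of_le one_le_two)).sub hmα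
  have hm''per : Function.Periodic (deriv (deriv m)) 1 :=
    periodic_deriv_of_periodic (periodic_deriv_of_periodic hmper)
  apply isHolderHalf_of_c1_periodic hm''per
  rw [funext hhm]; exact hhC1
end
end
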